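/- Let R be a commutative unital ring, α : ℤ → R a family of elements, and S_s^k(n) the associated Svinin polynomials. Let m ≥ 0 be an integer and let d_0, d_2, …, d_{2m} ∈ R. Define P_{0,n} := Σ_{r=0}^{m} d_{2r} · S_{r+1}^r(n+r−1). Then the following are equivalent: (i) for every n ∈ ℤ, α_{n−1} · P_{0,n−1} − α_n · P_{0,n+1} = 1; (ii) there exists an element c_0 ∈ R such that α satisfies the m-th member of the discrete first Painlevé hierarchy, i.e. Σ_{r=1}^{m+1} d_{2(r−1)} · S_r^r(n+r−1) + (n·1 − c_0) = 0 for every n ∈ ℤ (where n·1 denotes the image of the integer n in R). -/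

import Mathlib

/-- Svinin polynomials: `svinin α s k n` is `S_s^k(n)`, defined by
`S_s^0(n) = 1` and `S_s^k(n) = Σ_{j=0}^{s−1} α_{n−k−j+1} · S_{s−j}^{k−1}(n−j)` for `k ≥ 1`. -/
def svinin {R : Type*} [Ring R] (α : ℤ → R) : ℕ → ℕ → ℤ → R
  | _, 0, _ => 1
  | s, k + 1, n =>
      ∑ j ∈ Finset.range s,
        α (n - ((k : ℤ) + 1) - (j : ℤ) + 1) * svinin α (s - j) k (n - (j : ℤ))

/-- `P0 α m d n` is `P_{0,n} = Σ_{r=0}^{m} d_{2r} · S_{r+1}^r(n+r−1)`,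
where `d r` stands for `d_{2r}`. -/
def P0 {R : Type*} [Ring R] (α : ℤ → R) (m : ℕ) (d : ℕ → R) (n : ℤ) : R :=
  ∑ r ∈ Finset.range (m + 1), d r * svinin α (r + 1) r (n + (r : ℤ) - 1)

section Aux

variable {R : Type*} [CommRing R] (α : ℤ → R)

lemma svinin_rec (s k : ℕ) (n : ℤ) :
    svinin α s (k+1) n =
      ∑ j ∈ Finset.range s, α (n - k - j) * svinin α (s - j) k (n - j) := by
  rw [svinin]
  refine Finset.sum_congr rfl fun j _ => ?_
  ring_nf

lemma svinin_single (k : ℕ) (n : ℤ) :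
    svinin α 1 (k+1) n = α (n - k) * svinin α 1 k n := by
  rw [svinin_rec]; simp

lemma svinin_one : ∀ (k : ℕ) (n : ℤ),
    svinin α 1 (k+1) n = α n * svinin α 1 k (n-1)
  | 0, n => by simp [svinin_single, svinin]
  | k+1, n => by
    rw [svinin_single, svinin_one k n, svinin_single]
    push_cast
    ring_nf

lemma svinin_succ : ∀ (k s : ℕ) (n : ℤ),
    svinin α (s+1) (k+1) n = svinin α s (k+1) n + α (n - s) * svinin α (s+1) k (n-1)
  | 0, s, n => by
    simp only [svinin_rec, Finset.sum_range_succ]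
    norm_num [svinin]
  | k+1, s, n => by
    rw [svinin_rec, Finset.sum_range_succ]
    have e1 : ∀ j ∈ Finset.range s,
        α (n - ((k+1:ℕ):ℤ) - j) * svinin α (s+1-j) (k+1) (n - j)
          = α (n - ((k+1:ℕ):ℤ) - j) * svinin α (s-j) (k+1) (n - j)
            + α (n - s) * (α (n - ((k+1:ℕ):ℤ) - j) * svinin α (s-j+1) k (n - j - 1)) := by
      intro j hj
      have hj' : j ≤ s := le_of_lt (Finset.mem_range.mp hj)
      have h2 : s + 1 - j = (s - j) + 1 := by omega
      rw [h2, svinin_succ k (s-j) (n-j)]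
      have h3 : (n - j) - ((s - j : ℕ) : ℤ) = n - s := by
        have : ((s - j : ℕ) : ℤ) = (s:ℤ) - j := by push_cast [hj']; ring
        rw [this]; ring
      rw [h3]
      ring
    rw [Finset.sum_congr rfl e1, Finset.sum_add_distrib]
    have hss : s + 1 - s = 1 := by omega
    rw [hss, svinin_one]
    rw [svinin_rec α s (k+1) n]
    rw [svinin_rec α (s+1) k (n-1), Finset.sum_range_succ, hss]
    rw [mul_add, Finset.mul_sum]
    have e2 : ∀ j ∈ Finset.range s,
        α (n - s) * (α (n - 1 - (k:ℤ) - j) * svinin α (s+1-j) k (n - 1 - j))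
          = α (n - s) * (α (n - ((k+1:ℕ):ℤ) - j) * svinin α (s-j+1) k (n - j - 1)) := by
      intro j hj
      have hj' : j ≤ s := le_of_lt (Finset.mem_range.mp hj)
      have h2 : s + 1 - j = (s - j) + 1 := by omega
      have h4 : n - 1 - (k:ℤ) - j = n - ((k+1:ℕ):ℤ) - j := by push_cast; ring
      have h5 : n - 1 - (j:ℤ) = n - j - 1 := by ring
      rw [h2, h4, h5]
    rw [Finset.sum_congr rfl e2]
    have h6 : n - 1 - (k:ℤ) - s = n - ((k+1:ℕ):ℤ) - s := by push_cast; ring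
    have h7 : n - 1 - (s:ℤ) = n - s - 1 := by ring
    rw [h6, h7]
    ring

set_option maxHeartbeats 1000000 in
lemma svinin_main : ∀ (k : ℕ) (m : ℤ),
    svinin α (k+1) (k+1) m - svinin α (k+1) (k+1) (m+1)
      = α (m - k) * svinin α (k+1) k (m-1) - α (m + 1 - k) * svinin α (k+1) k (m+1)
  | 0, m => by norm_num [svinin_rec, svinin]
  | k+1, m => by
    rw [svinin_rec α (k+1+1) (k+1) m, Finset.sum_range_succ,
        svinin_rec α (k+1+1) (k+1) (m+1),
        Finset.sum_range_succ' (fun j => α (m + 1 - ((k+1:ℕ):ℤ) - j) * svinin α (k+1+1-j) (k+1) (m + 1 - j)) (k+1)]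
    have e0 : ∀ j ∈ Finset.range (k+1),
        α (m + 1 - ((k+1:ℕ):ℤ) - ((j+1:ℕ):ℤ)) * svinin α (k+1+1-(j+1)) (k+1) (m+1-((j+1:ℕ):ℤ))
          = α (m - ((k+1:ℕ):ℤ) - j) * svinin α (k+1-j) (k+1) (m - j) := by
      intro j _
      have h1 : k+1+1-(j+1) = k+1-j := by omega
      have h2 : m + 1 - ((k+1:ℕ):ℤ) - ((j+1:ℕ):ℤ) = m - ((k+1:ℕ):ℤ) - j := by push_cast; ring
      have h3 : m + 1 - ((j+1:ℕ):ℤ) = m - j := by push_cast; ring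
      rw [h1, h2, h3]
    rw [Finset.sum_congr rfl e0]
    have e1 : ∀ j ∈ Finset.range (k+1),
        α (m - ((k+1:ℕ):ℤ) - j) * svinin α (k+1+1-j) (k+1) (m - j)
          = α (m - ((k+1:ℕ):ℤ) - j) * svinin α (k+1-j) (k+1) (m - j)
            + α (m - ((k+1:ℕ):ℤ)) * (α (m - ((k+1:ℕ):ℤ) - j) * svinin α (k+1-j+1) k (m - j - 1)) := by
      intro j hj
      have hj' : j ≤ k := Nat.le_of_lt_succ (Finset.mem_range.mp hj)
      have h1 : k+1+1-j = (k+1-j)+1 := by omega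
      rw [h1, svinin_succ α k (k+1-j) (m-j)]
      have h2 : (m - j) - ((k+1-j:ℕ):ℤ) = m - ((k+1:ℕ):ℤ) := by
        have : ((k+1-j:ℕ):ℤ) = ((k+1:ℕ):ℤ) - j := by
          push_cast [Nat.le_succ_of_le hj']; ring
        rw [this]; ring
      rw [h2]
      ring
    rw [Finset.sum_congr rfl e1, Finset.sum_add_distrib]
    have hss : k+1+1-(k+1) = 1 := by omega
    have hz0 : k+1+1-0 = k+1+1 := rfl
    rw [hss, hz0, svinin_one]
    rw [svinin_rec α (k+1+1) k (m-1),
        Finset.sum_range_succ (fun j => α (m - 1 - (k:ℤ) - j) * svinin α (k+1+1-j) k (m - 1 - j)) (k+1),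
        hss]
    have e2 : ∀ j ∈ Finset.range (k+1),
        α (m - 1 - (k:ℤ) - j) * svinin α (k+1+1-j) k (m - 1 - j)
          = α (m - ((k+1:ℕ):ℤ) - j) * svinin α (k+1-j+1) k (m - j - 1) := by
      intro j hj
      have hj' : j ≤ k := Nat.le_of_lt_succ (Finset.mem_range.mp hj)
      have h1 : k+1+1-j = (k+1-j)+1 := by omega
      have h2 : m - 1 - (k:ℤ) - j = m - ((k+1:ℕ):ℤ) - j := by push_cast; ring
      have h3 : m - 1 - (j:ℤ) = m - j - 1 := by ring
      rw [h1, h2, h3]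
    rw [Finset.sum_congr rfl e2]
    have h4 : m - 1 - (k:ℤ) - ((k+1:ℕ):ℤ) = m - ((k+1:ℕ):ℤ) - ((k+1:ℕ):ℤ) := by push_cast; ring
    have h5 : m - 1 - ((k+1:ℕ):ℤ) = m - ((k+1:ℕ):ℤ) - 1 := by ring
    have h6 : m + 1 - ((k+1:ℕ):ℤ) - ((0:ℕ):ℤ) = m + 1 - ((k+1:ℕ):ℤ) := by norm_num
    have h7 : m + 1 - ((0:ℕ):ℤ) = m + 1 := by norm_num
    rw [h4, h5, h6, h7, mul_add, Finset.mul_sum]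
    have hc : α (m - ((k+1:ℕ):ℤ) - ((k+1:ℕ):ℤ)) * (α (m - ((k+1:ℕ):ℤ)) * svinin α 1 k (m - ((k+1:ℕ):ℤ) - 1))
        = α (m - ((k+1:ℕ):ℤ)) * (α (m - ((k+1:ℕ):ℤ) - ((k+1:ℕ):ℤ)) * svinin α 1 k (m - ((k+1:ℕ):ℤ) - 1)) := by
      ring
    rw [hc]
    have habc : ∀ A S c b : R, A + S + c - (A + b) = S + c - b := fun A S c b => by ring
    exact habc _ _ _ _

/-- The left-hand side of the hierarchy equation. -/
def Gfun (α : ℤ → R) (m : ℕ) (d : ℕ → R) (n : ℤ) : R :=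
  ∑ r ∈ Finset.range (m + 1), d r * svinin α (r+1) (r+1) (n + (r:ℤ))

lemma hIcc (m : ℕ) (d : ℕ → R) (n : ℤ) :
    (∑ r ∈ Finset.Icc 1 (m+1), d (r-1) * svinin α r r (n + (r:ℤ) - 1)) = Gfun α m d n := by
  rw [← Finset.Ico_add_one_right_eq_Icc, Finset.sum_Ico_eq_sum_range]
  simp only [Nat.add_sub_cancel, Nat.succ_sub_one]
  refine Finset.sum_congr rfl fun r _ => ?_
  have hr : 1 + r = r + 1 := by omega
  rw [hr]
  have h1 : r + 1 - 1 = r := by omega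
  have h2 : n + ((r+1:ℕ):ℤ) - 1 = n + r := by push_cast; ring
  rw [h1, h2]

lemma hkey (m : ℕ) (d : ℕ → R) (n : ℤ) :
    Gfun α m d (n-1) - Gfun α m d n
      = α (n-1) * P0 α m d (n-1) - α n * P0 α m d (n+1) := by
  rw [Gfun, Gfun, P0, P0, Finset.mul_sum, Finset.mul_sum,
      ← Finset.sum_sub_distrib, ← Finset.sum_sub_distrib]
  refine Finset.sum_congr rfl fun r _ => ?_
  have h := svinin_main α r (n + (r:ℤ) - 1)
  have a1 : n + (r:ℤ) - 1 - (r:ℤ) = n - 1 := by ring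
  have a2 : n + (r:ℤ) - 1 + 1 - (r:ℤ) = n := by ring
  have a3 : n + (r:ℤ) - 1 + 1 = n + (r:ℤ) := by ring
  have a4 : n + (r:ℤ) - 1 - 1 = n - 1 + (r:ℤ) - 1 := by ring
  have a5 : n + (r:ℤ) - 1 = n - 1 + (r:ℤ) := by ring
  have a6 : n + 1 + (r:ℤ) - 1 = n + (r:ℤ) := by ring
  rw [a1, a2, a3, a4, a5] at h
  rw [a6]
  linear_combination d r * h

end Aux

/-- In a commutative ring, the compatibility equation
`α_{n−1} · P_{0,n−1} − α_n · P_{0,n+1} = 1` for all `n` holds iff `α` satisfies the `m`-th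
member of the discrete first Painlevé hierarchy
`Σ_{r=1}^{m+1} d_{2(r−1)} · S_r^r(n+r−1) + (n·1 − c_0) = 0` for some constant `c_0`. -/
theorem dPIm_commutative {R : Type*} [CommRing R] (α : ℤ → R)
    (m : ℕ) (d : ℕ → R) :
    (∀ n : ℤ, α (n - 1) * P0 α m d (n - 1) - α n * P0 α m d (n + 1) = 1) ↔
    (∃ c₀ : R, ∀ n : ℤ,
      (∑ r ∈ Finset.Icc 1 (m + 1), d (r - 1) * svinin α r r (n + (r : ℤ) - 1))
        + ((n : R) - c₀) = 0) := by
  constructor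
  · intro h
    refine ⟨Gfun α m d 0, fun n => ?_⟩
    rw [hIcc]
    have hstep : ∀ t : ℤ, Gfun α m d (t-1) - Gfun α m d t = 1 := fun t => by
      rw [hkey]; exact h t
    suffices hs : Gfun α m d n = Gfun α m d 0 - n by rw [hs]; ring
    induction n using Int.induction_on with
    | zero => simp
    | succ i ih =>
        have ht := hstep ((i:ℤ)+1)
        rw [show ((i:ℤ)+1-1) = (i:ℤ) from by ring] at ht
        push_cast
        push_cast at ih
        linear_combination ih - ht
    | pred i ih =>
        have ht := hstep (-(i:ℤ))
        push_cast
        push_cast at ih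
        linear_combination ih + ht
  · rintro ⟨c₀, h⟩ n
    have h1 := h (n-1)
    have h2 := h n
    rw [hIcc] at h1 h2
    have hk := hkey α m d n
    push_cast at h1
    linear_combination h1 - h2 - hk
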